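/- Let f and g be holomorphic on a neighborhood of the closed unit disc. Then the rank-one operator f⊗g belongs to 𝔇 and Δ̃(f⊗g) = (f′⊗g′) + ((z²f)′⊗(z²g)′) − 2·((zf)′⊗(zg)′), where z denotes the identity function on 𝔻 and primes denote complex derivatives. -/

import Mathlib

open MeasureTheory Complex Metric Filter
open scoped ENNReal

noncomputable section

namespace Bergman

/-- The open unit disc in `ℂ`. -/
def unitDisc : Set ℂ := Metric.ball (0 : ℂ) 1

/-- The normalized area measure `dA` on the unit disc. -/
def dA : Measure ℂ := (ENNReal.ofReal Real.pi)⁻¹ • (volume.restrict unitDisc)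

instance : IsFiniteMeasure dA := by
  constructor
  rw [dA, Measure.smul_apply, smul_eq_mul]
  exact ENNReal.mul_lt_top
    (ENNReal.inv_lt_top.2 (by simp [Real.pi_pos]))
    (by simp [unitDisc, Measure.restrict_apply, measure_ball_lt_top])

/-- Membership in the Bergman space: admitting a holomorphic representative. -/
def IsBerg (f : Lp ℂ 2 dA) : Prop :=
  ∃ g : ℂ → ℂ, DifferentiableOn ℂ g unitDisc ∧ (↑↑f : ℂ → ℂ) =ᵐ[dA] g

lemma isBerg_zero : IsBerg 0 := ⟨0, differentiableOn_const 0, Lp.coeFn_zero ℂ 2 dA⟩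

lemma isBerg_add {f₁ f₂ : Lp ℂ 2 dA} (h₁ : IsBerg f₁) (h₂ : IsBerg f₂) : IsBerg (f₁ + f₂) := by
  obtain ⟨g₁, hg₁, he₁⟩ := h₁
  obtain ⟨g₂, hg₂, he₂⟩ := h₂
  exact ⟨g₁ + g₂, hg₁.add hg₂, (Lp.coeFn_add f₁ f₂).trans (he₁.add he₂)⟩

lemma isBerg_smul (c : ℂ) {f : Lp ℂ 2 dA} (h : IsBerg f) : IsBerg (c • f) := by
  obtain ⟨g, hg, he⟩ := h
  exact ⟨c • g, hg.const_smul c, (Lp.coeFn_smul c f).trans (he.const_smul c)⟩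

/-- The Bergman space `A²` as a subspace of `L²(𝔻, dA)`. -/
def bergman : Submodule ℂ (Lp ℂ 2 dA) where
  carrier := {f | IsBerg f}
  add_mem' := fun h₁ h₂ => isBerg_add h₁ h₂
  zero_mem' := isBerg_zero
  smul_mem' := fun c _ h => isBerg_smul c h

/-- The Bergman space. -/
abbrev A2 := ↥bergman

/-- The inner product, in the convention of the paper: `pin f g = ⟨f, g⟩` is linear
in `f` and conjugate linear in `g`. -/
def pin (f g : A2) : ℂ := inner (𝕜 := ℂ) g f

/-- The rank one operator `f ⊗ g : h ↦ ⟨h, g⟩ f`. -/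
def rankOne (f g : A2) : A2 →L[ℂ] A2 := (innerSL ℂ g).smulRight f

/-- The Möbius involution `φ_z` interchanging `0` and `z`. -/
def mobius (z w : ℂ) : ℂ := (z - w) / (1 - (starRingEnd ℂ) z * w)

/-- The derivative `φ_z'`. -/
def mderiv (z w : ℂ) : ℂ := -(1 - ((‖z‖ : ℝ) : ℂ) ^ 2) / (1 - (starRingEnd ℂ) z * w) ^ 2

/-- The function `U_z e_k = (e_k ∘ φ_z) ⬝ φ_z'`. -/
def UekFun (k : ℕ) (z : ℂ) : ℂ → ℂ :=
  fun w => (Real.sqrt (k + 1) : ℂ) * (mobius z w) ^ k * mderiv z w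

lemma denom_ne {z : ℂ} (hz : ‖z‖ < 1) {w : ℂ}
    (hw : w ∈ Metric.closedBall (0 : ℂ) 1) : (1 : ℂ) - (starRingEnd ℂ) z * w ≠ 0 := by
  intro h
  have hw1 : ‖w‖ ≤ 1 := by simpa [Complex.dist_eq] using hw
  have h1 : (starRingEnd ℂ) z * w = 1 := (sub_eq_zero.mp h).symm
  have h2 : ‖(starRingEnd ℂ) z * w‖ < 1 := by
    rw [norm_mul, Complex.norm_conj]
    calc ‖z‖ * ‖w‖ ≤ ‖z‖ * 1 :=
          mul_le_mul_of_nonneg_left hw1 (norm_nonneg z)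
      _ = ‖z‖ := mul_one _
      _ < 1 := hz
  rw [h1] at h2; simp at h2

lemma uekFun_contOn (k : ℕ) {z : ℂ} (hz : ‖z‖ < 1) :
    ContinuousOn (UekFun k z) (Metric.closedBall (0 : ℂ) 1) := by
  have hden : ContinuousOn (fun w : ℂ => (1 : ℂ) - (starRingEnd ℂ) z * w)
      (Metric.closedBall (0 : ℂ) 1) :=
    continuousOn_const.sub (continuousOn_const.mul continuousOn_id)
  refine ContinuousOn.mul (ContinuousOn.mul continuousOn_const ?_) ?_
  · exact ((continuousOn_const.sub continuousOn_id).div hden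
      (fun w hw => denom_ne hz hw)).pow k
  · exact continuousOn_const.div (hden.pow 2)
      (fun w hw => pow_ne_zero 2 (denom_ne hz hw))

lemma uekFun_diffOn (k : ℕ) {z : ℂ} (hz : ‖z‖ < 1) :
    DifferentiableOn ℂ (UekFun k z) unitDisc := by
  have hsub : unitDisc ⊆ Metric.closedBall (0 : ℂ) 1 := ball_subset_closedBall
  have hden : DifferentiableOn ℂ (fun w : ℂ => (1 : ℂ) - (starRingEnd ℂ) z * w) unitDisc :=
    (differentiableOn_const _).sub ((differentiableOn_const _).mul differentiableOn_id)
  refine DifferentiableOn.mul (DifferentiableOn.mul (differentiableOn_const _) ?_) ?_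
  · exact (((differentiableOn_const _).sub differentiableOn_id).div hden
      (fun w hw => denom_ne hz (hsub hw))).pow k
  · exact (differentiableOn_const _).div (hden.pow 2)
      (fun w hw => pow_ne_zero 2 (denom_ne hz (hsub hw)))

lemma ae_mem_unitDisc : ∀ᵐ w ∂dA, w ∈ unitDisc := by
  rw [dA]
  exact Measure.ae_smul_measure (ae_restrict_mem measurableSet_ball) _

lemma memLp_of_contOn {f : ℂ → ℂ}
    (hc : ContinuousOn f (Metric.closedBall (0 : ℂ) 1)) : MemLp f 2 dA := by
  obtain ⟨C, hC⟩ := (isCompact_closedBall (0 : ℂ) 1).exists_bound_of_continuousOn hc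
  have hmeas : AEStronglyMeasurable f dA := by
    rw [dA]
    exact ((hc.mono ball_subset_closedBall).aestronglyMeasurable
      measurableSet_ball).smul_measure _
  refine MemLp.of_bound hmeas C ?_
  filter_upwards [ae_mem_unitDisc] with w hw
  exact hC w (ball_subset_closedBall hw)

/-- Constructor for elements of the Bergman space from holomorphic functions that are
continuous up to the boundary. -/
def toA2 (f : ℂ → ℂ) (hd : DifferentiableOn ℂ f unitDisc)
    (hc : ContinuousOn f (Metric.closedBall (0 : ℂ) 1)) : A2 :=
  ⟨(memLp_of_contOn hc).toLp f, ⟨f, hd, MemLp.coeFn_toLp _⟩⟩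

/-- The standard orthonormal basis `e_k(w) = √(k+1) wᵏ` of the Bergman space. -/
def ek (k : ℕ) : A2 :=
  toA2 (fun w => (Real.sqrt (k + 1) : ℂ) * w ^ k)
    ((differentiableOn_const _).mul (differentiableOn_id.pow k))
    (continuousOn_const.mul (continuousOn_id.pow k))

/-- The element `U_z e_k` of the Bergman space (junk value `0` if `z ∉ 𝔻`). -/
def Uek (z : ℂ) (k : ℕ) : A2 :=
  if hz : ‖z‖ < 1 then
    toA2 (UekFun k z) (uekFun_diffOn k hz) (uekFun_contOn k hz)
  else 0

/-- The `n`-Berezin transform of a bounded operator `Q` on the Bergman space. -/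
def berezin (n : ℕ) (Q : A2 →L[ℂ] A2) : ℂ → ℂ := fun z =>
  ((n : ℂ) + 1) * ∑ j ∈ Finset.range (n + 1),
    ((n.choose j : ℂ)) * ((-1 : ℂ) ^ j / ((j : ℂ) + 1)) * pin (Q (Uek z j)) (Uek z j)

/-- The integrand in the weak definition of `T^{(k)}`:
`z ↦ ⟨f, U_z e_k⟩ ⟨U_z e_k, g⟩ (1-|z|²)⁻²`. -/
def toepKernel (k : ℕ) (f g : A2) (z : ℂ) : ℂ :=
  pin f (Uek z k) * pin (Uek z k) g * (((1 - ‖z‖ ^ 2) ^ 2 : ℝ) : ℂ)⁻¹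

/-- `T` is the generalized Toeplitz operator `T_μ^{(k)}` of a positive measure `μ`:
the defining integral converges in the weak operator topology and represents the
sesquilinear form of `T`. -/
def IsToepM (μ : Measure ℂ) (k : ℕ) (T : A2 →L[ℂ] A2) : Prop :=
  ∀ f g : A2, Integrable (toepKernel k f g) μ ∧
    pin (T f) g = ∫ z, toepKernel k f g z ∂μ

/-- `T` is the generalized Toeplitz operator `T_a^{(k)}` with symbol function `a`;
`T_a^{(0)} = T_a` is the classical Toeplitz operator. -/
def IsToepFn (a : ℂ → ℂ) (k : ℕ) (T : A2 →L[ℂ] A2) : Prop :=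
  ∀ f g : A2, Integrable (fun z => a z * toepKernel k f g z) dA ∧
    pin (T f) g = ∫ z, a z * toepKernel k f g z ∂dA

/-- Integral of a function against a complex measure, via the Jordan decompositions of
its real and imaginary parts. -/
def cInt (μ : ComplexMeasure ℂ) (f : ℂ → ℂ) : ℂ :=
  ((∫ z, f z ∂(ComplexMeasure.re μ).toJordanDecomposition.posPart) -
    (∫ z, f z ∂(ComplexMeasure.re μ).toJordanDecomposition.negPart)) +
  Complex.I * ((∫ z, f z ∂(ComplexMeasure.im μ).toJordanDecomposition.posPart) -
    (∫ z, f z ∂(ComplexMeasure.im μ).toJordanDecomposition.negPart))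

/-- Integrability with respect to a complex measure. -/
def cIntegrable (μ : ComplexMeasure ℂ) (f : ℂ → ℂ) : Prop :=
  Integrable f (ComplexMeasure.re μ).toJordanDecomposition.posPart ∧
  Integrable f (ComplexMeasure.re μ).toJordanDecomposition.negPart ∧
  Integrable f (ComplexMeasure.im μ).toJordanDecomposition.posPart ∧
  Integrable f (ComplexMeasure.im μ).toJordanDecomposition.negPart

/-- The total variation of a complex measure (equivalent, with two-sided bounds, to `|μ|`). -/
def cVariation (μ : ComplexMeasure ℂ) : Measure ℂ :=
  (ComplexMeasure.re μ).totalVariation + (ComplexMeasure.im μ).totalVariation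

/-- `T` is the generalized Toeplitz operator `T_μ^{(k)}` of a complex measure `μ`. -/
def IsToepC (μ : ComplexMeasure ℂ) (k : ℕ) (T : A2 →L[ℂ] A2) : Prop :=
  ∀ f g : A2, cIntegrable μ (toepKernel k f g) ∧
    pin (T f) g = cInt μ (toepKernel k f g)

/-- The `n`-Berezin transform `B_n(μ)` of a complex measure. -/
def berezinC (n : ℕ) (μ : ComplexMeasure ℂ) : ℂ → ℂ := fun z =>
  cInt μ (fun ζ => ((((n : ℝ) + 1) * (1 - ‖mobius z ζ‖ ^ 2) ^ (n + 2) *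
    (((1 - ‖ζ‖ ^ 2) ^ 2))⁻¹ : ℝ) : ℂ))

/-- The Wirtinger derivative `∂`. -/
def wirtD (f : ℂ → ℂ) (z : ℂ) : ℂ :=
  (fderiv ℝ f z 1 - Complex.I * fderiv ℝ f z Complex.I) / 2

/-- The Wirtinger derivative `∂̄`. -/
def wirtDbar (f : ℂ → ℂ) (z : ℂ) : ℂ :=
  (fderiv ℝ f z 1 + Complex.I * fderiv ℝ f z Complex.I) / 2

/-- The invariant Laplacian `Δ̃ = (1-|z|²)² ∂∂̄`. -/
def invLap (f : ℂ → ℂ) : ℂ → ℂ := fun z =>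
  (((1 - ‖z‖ ^ 2) ^ 2 : ℝ) : ℂ) * wirtD (wirtDbar f) z

/-- `T = Δ̃ S` in the sense of the domain `𝔇`: `Δ̃ B₀(S) = B₀(T)` on the disc.
Membership `S ∈ 𝔇` is `∃ T, IsLap S T` (such `T` is unique since `B₀` is injective). -/
def IsLap (S T : A2 →L[ℂ] A2) : Prop :=
  ∀ z ∈ unitDisc, invLap (berezin 0 S) z = berezin 0 T z

/-- The Berezin transform `B₀(μ)` of a positive measure, as an `ℝ≥0∞`-valued function. -/
def ber0M (μ : Measure ℂ) (z : ℂ) : ℝ≥0∞ :=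
  ∫⁻ ζ, ENNReal.ofReal ((1 - ‖mobius z ζ‖ ^ 2) ^ 2 *
    (((1 - ‖ζ‖ ^ 2) ^ 2))⁻¹) ∂μ

/-- `‖B₀(μ)‖_∞` as an `ℝ≥0∞` quantity. -/
def ber0Norm (μ : Measure ℂ) : ℝ≥0∞ := ⨆ z ∈ unitDisc, ber0M μ z

/-- A positive measure is Carleson iff `‖B₀(μ)‖_∞ < ∞`. -/
def IsCarleson (μ : Measure ℂ) : Prop := ber0Norm μ ≠ ⊤

/-- A positive measure is a vanishing Carleson measure iff `B₀(μ)(z) → 0` as `|z| → 1`. -/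
def IsVanishingCarleson (μ : Measure ℂ) : Prop :=
  ∀ ε : ℝ, 0 < ε → ∃ r : ℝ, 0 ≤ r ∧ r < 1 ∧
    ∀ z ∈ unitDisc, r < ‖z‖ → ber0M μ z < ENNReal.ofReal ε

/-- The pseudo-hyperbolic distance. -/
def pseudoDist (z w : ℂ) : ℝ := ‖mobius z w‖

/-- The hyperbolic distance `β`. -/
def hypDist (z w : ℂ) : ℝ :=
  Real.log ((1 + pseudoDist z w) / (1 - pseudoDist z w))

/-- The pseudo-hyperbolic disc `D(v, r)`. -/
def pDisc (v : ℂ) (r : ℝ) : Set ℂ := {z ∈ unitDisc | ‖mobius v z‖ ≤ r}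




-- ============ Section A: moment lemma ============

variable {f : ℂ → ℂ}

/-- Taylor coefficients of `f` at 0. -/
def coeff (f : ℂ → ℂ) (n : ℕ) : ℂ := cauchyPowerSeries f 0 1 n (fun _ => 1)

lemma coeff_radius {R : ℝ} (hR : 1 < R) (hf : DifferentiableOn ℂ f (ball 0 R))
    {r : ℝ} (hr0 : 0 < r) (hr1 : r ≤ 1) :
    cauchyPowerSeries f 0 r = cauchyPowerSeries f 0 1 := by
  have h1 : DifferentiableOn ℂ f (closedBall (0:ℂ) ((1:NNReal) : ℝ)) :=
    hf.mono (by simpa using closedBall_subset_ball hR)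
  have hrc : DifferentiableOn ℂ f (closedBall (0:ℂ) ((⟨r, hr0.le⟩ : NNReal) : ℝ)) :=
    hf.mono (closedBall_subset_ball (lt_of_le_of_lt hr1 hR))
  have A := (h1.hasFPowerSeriesOnBall (R := 1) one_pos).hasFPowerSeriesAt
  have B := (hrc.hasFPowerSeriesOnBall (R := ⟨r, hr0.le⟩) (by exact_mod_cast hr0)).hasFPowerSeriesAt
  have C := B.eq_formalMultilinearSeries A
  simp only [NNReal.coe_one] at C
  exact C

lemma circle_moment {R : ℝ} (hR : 1 < R) (hf : DifferentiableOn ℂ f (ball 0 R))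
    {r : ℝ} (hr0 : 0 < r) (hr1 : r ≤ 1) (n : ℕ) :
    ∫ θ in (0:ℝ)..(2*Real.pi),
        f (circleMap 0 r θ) * ((starRingEnd ℂ) (circleMap 0 r θ)) ^ n
      = 2 * Real.pi * ((r:ℂ)^2) ^ n * coeff f n := by
  have hne : ∀ θ : ℝ, circleMap 0 r θ ≠ 0 := fun θ => circleMap_ne_center hr0.ne'
  have key : (cauchyPowerSeries f 0 r n fun _ => (1:ℂ)) = coeff f n := by
    rw [coeff_radius hR hf hr0 hr1]; rfl
  rw [cauchyPowerSeries_apply] at key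
  -- unfold the circle integral
  rw [circleIntegral] at key
  have : ∀ θ : ℝ, deriv (circleMap 0 r) θ •
      (((1:ℂ) / (circleMap 0 r θ - 0)) ^ n • ((circleMap 0 r θ - 0)⁻¹ • f (circleMap 0 r θ)))
      = Complex.I * ((circleMap 0 r θ)⁻¹ ^ n * f (circleMap 0 r θ)) := by
    intro θ
    have hz := hne θ
    rw [deriv_circleMap]
    simp only [sub_zero, smul_eq_mul, one_div]
    field_simp
  simp only [this] at key
  rw [intervalIntegral.integral_const_mul] at key
  have hπ : (2 * (Real.pi:ℂ) * Complex.I) ≠ 0 := by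
    simp [Real.pi_ne_zero, Complex.I_ne_zero]
  have key2 : ∫ θ in (0:ℝ)..(2*Real.pi), (circleMap 0 r θ)⁻¹ ^ n * f (circleMap 0 r θ)
      = 2 * Real.pi * coeff f n := by
    rw [smul_eq_mul, inv_mul_eq_iff_eq_mul₀ hπ] at key
    apply mul_left_cancel₀ Complex.I_ne_zero
    rw [key]; ring
  have h1 : ∀ θ : ℝ, (starRingEnd ℂ) (circleMap 0 r θ) * circleMap 0 r θ = ((r:ℂ))^2 := by
    intro θ
    rw [mul_comm, Complex.mul_conj, Complex.normSq_eq_norm_sq, norm_circleMap_zero, abs_of_pos hr0]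
    push_cast; ring
  have hconj : ∀ θ : ℝ, ((starRingEnd ℂ) (circleMap 0 r θ)) ^ n
      = ((r:ℂ)^2) ^ n * (circleMap 0 r θ)⁻¹ ^ n := by
    intro θ
    rw [← mul_pow]
    congr 1
    rw [eq_mul_inv_iff_mul_eq₀ (hne θ)]
    exact h1 θ
  calc ∫ θ in (0:ℝ)..(2*Real.pi), f (circleMap 0 r θ) * ((starRingEnd ℂ) (circleMap 0 r θ)) ^ n
      = ∫ θ in (0:ℝ)..(2*Real.pi),
          ((r:ℂ)^2)^n * ((circleMap 0 r θ)⁻¹ ^ n * f (circleMap 0 r θ)) := by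
        refine intervalIntegral.integral_congr fun θ _ => ?_
        rw [hconj]; ring
    _ = ((r:ℂ)^2)^n * (2 * Real.pi * coeff f n) := by
        rw [intervalIntegral.integral_const_mul, key2]
    _ = 2 * Real.pi * ((r:ℂ)^2) ^ n * coeff f n := by ring

lemma polar_symm_eq (p : ℝ × ℝ) : Complex.polarCoord.symm p = circleMap 0 p.1 p.2 := by
  rw [Complex.polarCoord_symm_apply, circleMap, Complex.exp_mul_I]
  push_cast [Complex.ofReal_cos, Complex.ofReal_sin]
  ring

lemma area_moment {R : ℝ} (hR : 1 < R) (hf : DifferentiableOn ℂ f (ball 0 R)) (n : ℕ) :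
    ∫ w in ball (0:ℂ) 1, f w * ((starRingEnd ℂ) w) ^ n
      = (Real.pi / (n+1)) * coeff f n := by
  classical
  set F : ℂ → ℂ := (ball (0:ℂ) 1).indicator (fun w => f w * ((starRingEnd ℂ) w) ^ n) with hF
  have h0 : ∫ w in ball (0:ℂ) 1, f w * ((starRingEnd ℂ) w) ^ n = ∫ w, F w :=
    (integral_indicator measurableSet_ball).symm
  rw [h0, ← Complex.integral_comp_polarCoord_symm]
  set s : Set (ℝ × ℝ) := Set.Ioo (0:ℝ) 1 ×ˢ Set.Ioo (-Real.pi) Real.pi with hs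
  have habs : ∀ p : ℝ × ℝ, ‖Complex.polarCoord.symm p‖ = |p.1| :=
    Complex.norm_polarCoord_symm
  have hstep1 : ∫ p in polarCoord.target, p.1 • F (Complex.polarCoord.symm p)
      = ∫ p in s, p.1 • F (Complex.polarCoord.symm p) := by
    refine setIntegral_eq_of_subset_of_forall_diff_eq_zero
      (measurableSet_Ioi.prod measurableSet_Ioo) ?_ ?_
    · rintro ⟨r, θ⟩ ⟨hr, hθ⟩
      exact ⟨hr.1, hθ⟩
    · rintro ⟨r, θ⟩ ⟨⟨hr, hθ⟩, hns⟩
      have hr1 : (1:ℝ) ≤ r := by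
        by_contra hlt
        exact hns ⟨⟨hr, not_le.mp hlt⟩, hθ⟩
      have : Complex.polarCoord.symm (r, θ) ∉ ball (0:ℂ) 1 := by
        simp only [mem_ball, Complex.dist_eq, sub_zero, not_lt]
        rw [habs]
        simpa using le_trans hr1 (le_abs_self r)
      rw [hF, Set.indicator_of_notMem this, smul_zero]
  rw [hstep1]
  set G : ℝ × ℝ → ℂ := fun p =>
    p.1 • (f (circleMap 0 p.1 p.2) * ((starRingEnd ℂ) (circleMap 0 p.1 p.2)) ^ n) with hG
  have hstep2 : ∫ p in s, p.1 • F (Complex.polarCoord.symm p) = ∫ p in s, G p := by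
    refine setIntegral_congr_fun (measurableSet_Ioo.prod measurableSet_Ioo) ?_
    rintro ⟨r, θ⟩ ⟨hr, hθ⟩
    have hmem : Complex.polarCoord.symm (r, θ) ∈ ball (0:ℂ) 1 := by
      simp only [mem_ball, Complex.dist_eq, sub_zero]
      rw [habs]
      simpa [abs_of_pos hr.1] using hr.2
    rw [hF]
    simp only [Set.indicator_of_mem hmem]
    rw [polar_symm_eq]
  rw [hstep2]
  -- Fubini
  have hKcont : ContinuousOn G (Set.Icc (0:ℝ) 1 ×ˢ Set.Icc (-Real.pi) Real.pi) := by
    have hφ : Continuous (fun p : ℝ × ℝ => circleMap 0 p.1 p.2) := by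
      simp only [circleMap, zero_add]
      exact (Complex.continuous_ofReal.comp continuous_fst).mul
        (Complex.continuous_exp.comp ((Complex.continuous_ofReal.comp continuous_snd).mul
          continuous_const))
    have hmaps : Set.MapsTo (fun p : ℝ × ℝ => circleMap 0 p.1 p.2)
        (Set.Icc (0:ℝ) 1 ×ˢ Set.Icc (-Real.pi) Real.pi) (ball (0:ℂ) R) := by
      rintro ⟨r, θ⟩ ⟨hr, hθ⟩
      simp only [mem_ball, Complex.dist_eq, sub_zero]
      rw [norm_circleMap_zero]
      calc |r| ≤ 1 := abs_le.mpr ⟨le_trans (by norm_num) hr.1, hr.2⟩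
        _ < R := hR
    refine ContinuousOn.smul (continuous_fst.continuousOn) ?_
    exact ((hf.continuousOn.comp hφ.continuousOn hmaps).mul
      (((Complex.continuous_conj.comp hφ).continuousOn).pow n))
  have hint : IntegrableOn G s := by
    refine (hKcont.integrableOn_compact (isCompact_Icc.prod isCompact_Icc)).mono_set ?_
    exact Set.prod_mono Set.Ioo_subset_Icc_self Set.Ioo_subset_Icc_self
  rw [hs, Measure.volume_eq_prod, ← Measure.prod_restrict, integral_prod _ (by
    rwa [Measure.prod_restrict, ← Measure.volume_eq_prod])]
  -- inner integral
  have hinner : ∀ r ∈ Set.Ioo (0:ℝ) 1,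
      ∫ θ in Set.Ioo (-Real.pi) Real.pi, G (r, θ)
        = (r:ℂ) * (2 * Real.pi * ((r:ℂ)^2)^n * coeff f n) := by
    intro r hr
    have hper : Function.Periodic
        (fun θ => f (circleMap 0 r θ) * ((starRingEnd ℂ) (circleMap 0 r θ)) ^ n)
        (2 * Real.pi) := fun θ => by simp only [(periodic_circleMap 0 r) θ]
    calc ∫ θ in Set.Ioo (-Real.pi) Real.pi, G (r, θ)
        = (r:ℂ) * ∫ θ in Set.Ioo (-Real.pi) Real.pi,
            f (circleMap 0 r θ) * ((starRingEnd ℂ) (circleMap 0 r θ)) ^ n := by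
          simp only [hG, Complex.real_smul]
          rw [integral_const_mul]
      _ = (r:ℂ) * ∫ θ in (-Real.pi)..Real.pi,
            f (circleMap 0 r θ) * ((starRingEnd ℂ) (circleMap 0 r θ)) ^ n := by
          rw [intervalIntegral.integral_of_le (by linarith [Real.pi_pos]),
            integral_Ioc_eq_integral_Ioo]
      _ = (r:ℂ) * ∫ θ in (0:ℝ)..(2*Real.pi),
            f (circleMap 0 r θ) * ((starRingEnd ℂ) (circleMap 0 r θ)) ^ n := by
          have := hper.intervalIntegral_add_eq (-Real.pi) 0
          rw [show -Real.pi + 2*Real.pi = Real.pi by ring, zero_add] at this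
          rw [this]
      _ = (r:ℂ) * (2 * Real.pi * ((r:ℂ)^2)^n * coeff f n) := by
          rw [circle_moment hR hf hr.1 hr.2.le n]
  rw [setIntegral_congr_fun measurableSet_Ioo hinner]
  -- outer integral
  have houter : ∫ r in Set.Ioo (0:ℝ) 1, (r:ℂ) * (2 * Real.pi * ((r:ℂ)^2)^n * coeff f n)
      = (Real.pi / (n+1)) * coeff f n := by
    have h1 : ∀ r : ℝ, (r:ℂ) * (2 * Real.pi * ((r:ℂ)^2)^n * coeff f n)
        = ((r ^ (2*n+1) : ℝ) : ℂ) * (2 * Real.pi * coeff f n) := by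
      intro r; push_cast; ring
    simp only [h1]
    rw [integral_mul_const, ← integral_Ioc_eq_integral_Ioo,
      ← intervalIntegral.integral_of_le (by norm_num : (0:ℝ) ≤ 1)]
    rw [intervalIntegral.integral_ofReal, integral_pow]
    have hnn : ((n:ℂ) + 1) ≠ 0 := Nat.cast_add_one_ne_zero n
    have h2 : ((2 * n + 1 + 1 : ℕ) : ℂ) ≠ 0 := Nat.cast_ne_zero.mpr (by omega)
    push_cast at h2 ⊢
    rw [one_pow, zero_pow (by omega : 2*n+1+1 ≠ 0)]
    field_simp
    ring
  rw [houter]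

lemma hasSum_one_add_mul_geometric {x : ℂ} (hx : ‖x‖ < 1) :
    HasSum (fun n : ℕ => ((n:ℂ) + 1) * x ^ n) (((1 - x) ^ 2)⁻¹) := by
  have hx' : ‖x‖ < 1 := by exact hx
  have h := hasSum_choose_mul_geometric_of_norm_lt_one 1 hx'
  simp only [Nat.choose_one_right, pow_one, one_div] at h
  convert h using 2 with n
  · rfl
  · push_cast; ring

lemma cauchy_apply_eq (f : ℂ → ℂ) (k : ℕ) (z : ℂ) :
    (cauchyPowerSeries f 0 1 k fun _ => z) = z ^ k * coeff f k := by
  simp [cauchyPowerSeries, coeff, ContinuousMultilinearMap.mkPiRing_apply, Finset.prod_const,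
    smul_eq_mul]

lemma coeff_hasSum {R : ℝ} (hR : 1 < R) (hf : DifferentiableOn ℂ f (ball 0 R))
    {z : ℂ} (hz : ‖z‖ < 1) :
    HasSum (fun k : ℕ => z ^ k * coeff f k) (f z) := by
  have h1 : DifferentiableOn ℂ f (closedBall (0:ℂ) ((1:NNReal) : ℝ)) :=
    hf.mono (by simpa using closedBall_subset_ball hR)
  have hball := h1.hasFPowerSeriesOnBall (R := 1) one_pos
  have hzmem : z ∈ eball (0:ℂ) (1:NNReal) := by
    rw [mem_emetric_ball_zero_iff]
    have : ‖z‖ < 1 := by exact hz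
    exact_mod_cast this
  have := hball.hasSum hzmem
  simp only [zero_add, NNReal.coe_one, cauchy_apply_eq] at this
  exact this

lemma reproducing {R : ℝ} (hR : 1 < R) (hf : DifferentiableOn ℂ f (ball 0 R))
    {z : ℂ} (hz : ‖z‖ < 1) :
    ∫ w, (((1 : ℂ) - z * (starRingEnd ℂ) w) ^ 2)⁻¹ * f w ∂dA = f z := by
  have hsub : closedBall (0:ℂ) 1 ⊆ ball 0 R := closedBall_subset_ball hR
  obtain ⟨C, hC⟩ := (isCompact_closedBall (0:ℂ) 1).exists_bound_of_continuousOn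
    (hf.continuousOn.mono hsub)
  set Fk : ℕ → ℂ → ℂ := fun k w => ((k:ℂ) + 1) * (z * (starRingEnd ℂ) w) ^ k * f w with hFk
  have hxlt : ∀ w ∈ ball (0:ℂ) 1, ‖z * (starRingEnd ℂ) w‖ < 1 := by
    intro w hw
    rw [norm_mul, Complex.norm_conj]
    have hw1 : ‖w‖ < 1 := by simpa [Complex.dist_eq] using hw
    calc ‖z‖ * ‖w‖ ≤ 1 * ‖w‖ :=
          mul_le_mul_of_nonneg_right hz.le (norm_nonneg w)
      _ = ‖w‖ := one_mul _
      _ < 1 := hw1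
  have hptws : ∀ w ∈ ball (0:ℂ) 1,
      HasSum (fun k => Fk k w) ((((1 : ℂ) - z * (starRingEnd ℂ) w) ^ 2)⁻¹ * f w) := by
    intro w hw
    exact (hasSum_one_add_mul_geometric (hxlt w hw)).mul_right (f w)
  -- integrability of each term
  have hintk : ∀ k : ℕ, IntegrableOn (Fk k) (ball (0:ℂ) 1) := by
    intro k
    have hcont : ContinuousOn (Fk k) (closedBall (0:ℂ) 1) := by
      refine ContinuousOn.mul (ContinuousOn.mul continuousOn_const ?_) (hf.continuousOn.mono hsub)
      exact ((continuousOn_const.mul (Complex.continuous_conj.continuousOn)).pow k)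
    exact (hcont.integrableOn_compact (isCompact_closedBall _ _)).mono_set ball_subset_closedBall
  -- summability of the integrals of norms
  have hC0 : 0 ≤ C := le_trans (norm_nonneg _) (hC 0 (by simp))
  have hbound : ∀ k : ℕ, ∀ w ∈ ball (0:ℂ) 1,
      ‖Fk k w‖ ≤ ((k:ℝ) + 1) * ‖z‖ ^ k * C := by
    intro k w hw
    have hw1 : ‖w‖ ≤ 1 := by
      have : ‖w‖ < 1 := by simpa [Complex.dist_eq] using hw
      exact this.le
    rw [hFk]
    simp only [norm_mul, norm_pow]
    have h1 : ‖(k:ℂ) + 1‖ = (k:ℝ) + 1 := by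
      rw [show ((k:ℂ) + 1) = ((((k:ℝ) + 1) : ℝ) : ℂ) by push_cast; ring, Complex.norm_real, Real.norm_eq_abs]
      exact abs_of_nonneg (by positivity)
    rw [h1]
    simp only [norm_mul, Complex.norm_conj]
    have h2 : ‖z‖ * ‖w‖ ≤ ‖z‖ := by
      calc ‖z‖ * ‖w‖ ≤ ‖z‖ * 1 :=
        mul_le_mul_of_nonneg_left hw1 (norm_nonneg z)
      _ = ‖z‖ := mul_one _
    have h3 : (‖z‖ * ‖w‖) ^ k ≤ ‖z‖ ^ k :=
      pow_le_pow_left₀ (by positivity) h2 k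
    have h4 : ‖f w‖ ≤ C := hC w (ball_subset_closedBall hw)
    calc ((k:ℝ) + 1) * (‖z‖ * ‖w‖) ^ k * ‖f w‖
        ≤ ((k:ℝ) + 1) * ‖z‖ ^ k * ‖f w‖ := by
          have := mul_le_mul_of_nonneg_left h3 (by positivity : (0:ℝ) ≤ (k:ℝ) + 1)
          exact mul_le_mul_of_nonneg_right this (norm_nonneg _)
      _ ≤ ((k:ℝ) + 1) * ‖z‖ ^ k * C := by
          exact mul_le_mul_of_nonneg_left h4 (by positivity)
  have hsum : Summable (fun k : ℕ => ∫ w in ball (0:ℂ) 1, ‖Fk k w‖) := by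
    have hs2 : Summable (fun k : ℕ => (volume (ball (0:ℂ) 1)).toReal *
        (((k:ℝ) + 1) * ‖z‖ ^ k * C)) := by
      apply Summable.mul_left
      have : Summable (fun k : ℕ => ((k:ℝ) + 1) * ‖z‖ ^ k) := by
        have h1 : Summable (fun k : ℕ => ((k:ℝ)) ^ 1 * ‖z‖ ^ k) :=
          summable_pow_mul_geometric_of_norm_lt_one 1
            (by rwa [Real.norm_eq_abs, _root_.abs_of_nonneg (norm_nonneg z)])
        have h2 : Summable (fun k : ℕ => ‖z‖ ^ k) :=
          summable_geometric_of_lt_one (norm_nonneg z) hz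
        simpa [add_mul, pow_one] using h1.add h2
      exact this.mul_right C
    refine Summable.of_nonneg_of_le (fun k => integral_nonneg fun w => norm_nonneg _)
      (fun k => ?_) hs2
    calc ∫ w in ball (0:ℂ) 1, ‖Fk k w‖
        ≤ ∫ _ in ball (0:ℂ) 1, (((k:ℝ) + 1) * ‖z‖ ^ k * C) := by
          refine setIntegral_mono_on ((hintk k).norm) ?_ measurableSet_ball (hbound k)
          exact integrableOn_const measure_ball_lt_top.ne
      _ = (volume (ball (0:ℂ) 1)).toReal * (((k:ℝ) + 1) * ‖z‖ ^ k * C) := by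
          rw [setIntegral_const, smul_eq_mul, measureReal_def]
  -- term integrals
  have hterm : ∀ k : ℕ, ∫ w in ball (0:ℂ) 1, Fk k w = Real.pi * (z ^ k * coeff f k) := by
    intro k
    have : ∀ w : ℂ, Fk k w = (((k:ℂ) + 1) * z ^ k) * (f w * ((starRingEnd ℂ) w) ^ k) := by
      intro w; rw [hFk]; simp only [mul_pow]; ring
    simp only [this]
    rw [MeasureTheory.integral_const_mul, area_moment hR hf k]
    have hk : ((k:ℂ) + 1) ≠ 0 := Nat.cast_add_one_ne_zero k
    field_simp
  have hmain : ∫ w in ball (0:ℂ) 1, (((1 : ℂ) - z * (starRingEnd ℂ) w) ^ 2)⁻¹ * f w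
      = Real.pi * f z := by
    have e1 : ∫ w in ball (0:ℂ) 1, (((1 : ℂ) - z * (starRingEnd ℂ) w) ^ 2)⁻¹ * f w
        = ∫ w in ball (0:ℂ) 1, ∑' k, Fk k w := by
      refine setIntegral_congr_fun measurableSet_ball fun w hw => ?_
      exact (hptws w hw).tsum_eq.symm
    rw [e1, ← integral_tsum_of_summable_integral_norm hintk hsum]
    calc ∑' k, ∫ w in ball (0:ℂ) 1, Fk k w
        = ∑' k, (Real.pi : ℂ) * (z ^ k * coeff f k) := tsum_congr hterm
      _ = Real.pi * ∑' k, z ^ k * coeff f k := tsum_mul_left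
      _ = Real.pi * f z := by rw [(coeff_hasSum hR hf hz).tsum_eq]
  have hdA : ∫ w, (((1 : ℂ) - z * (starRingEnd ℂ) w) ^ 2)⁻¹ * f w ∂dA
      = ((ENNReal.ofReal Real.pi)⁻¹).toReal •
        ∫ w in ball (0:ℂ) 1, (((1 : ℂ) - z * (starRingEnd ℂ) w) ^ 2)⁻¹ * f w := by
    rw [dA, integral_smul_measure]
    rfl
  rw [hdA, hmain, ENNReal.toReal_inv, ENNReal.toReal_ofReal Real.pi_pos.le,
    Complex.real_smul]
  push_cast
  field_simp

-- ============ Section C: Berezin transform of rank one operators ============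

lemma Uek_ae {z : ℂ} (hz : ‖z‖ < 1) :
    (↑↑((Uek z 0 : A2) : Lp ℂ 2 dA) : ℂ → ℂ) =ᵐ[dA] fun w => mderiv z w := by
  rw [Uek, dif_pos hz]
  have h1 : (↑↑((toA2 (UekFun 0 z) (uekFun_diffOn 0 hz) (uekFun_contOn 0 hz) : A2) : Lp ℂ 2 dA)
      : ℂ → ℂ) =ᵐ[dA] UekFun 0 z := MemLp.coeFn_toLp (memLp_of_contOn (uekFun_contOn 0 hz))
  have h2 : UekFun 0 z = fun w => mderiv z w := by
    funext w
    simp [UekFun]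
  exact h1.trans (by rw [h2])

lemma pin_integral (F G : A2) :
    pin F G = ∫ w, (starRingEnd ℂ) ((↑↑((G : A2) : Lp ℂ 2 dA) : ℂ → ℂ) w) *
      (↑↑((F : A2) : Lp ℂ 2 dA) : ℂ → ℂ) w ∂dA := by
  rw [pin, Submodule.coe_inner, MeasureTheory.L2.inner_def]
  congr 1
  funext w; rw [RCLike.inner_apply, mul_comm]

lemma conj_mderiv {z w : ℂ} :
    (starRingEnd ℂ) (mderiv z w)
      = -(1 - ((‖z‖ : ℝ):ℂ)^2) * (((1:ℂ) - z * (starRingEnd ℂ) w) ^ 2)⁻¹ := by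
  rw [mderiv, div_eq_mul_inv]
  simp only [map_mul, map_neg, map_sub, map_one, map_pow, map_inv₀, Complex.conj_conj,
    Complex.conj_ofReal]

lemma pin_Uek_right {R : ℝ} (hR : 1 < R) {f : ℂ → ℂ} (hf : DifferentiableOn ℂ f (ball 0 R))
    {F : A2} (hFae : (↑↑((F : A2) : Lp ℂ 2 dA) : ℂ → ℂ) =ᵐ[dA] f)
    {z : ℂ} (hz : ‖z‖ < 1) :
    pin F (Uek z 0) = -(1 - ((‖z‖ : ℝ):ℂ)^2) * f z := by
  rw [pin_integral]
  have hcongr : (fun w => (starRingEnd ℂ) ((↑↑((Uek z 0 : A2) : Lp ℂ 2 dA) : ℂ → ℂ) w) *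
      (↑↑((F : A2) : Lp ℂ 2 dA) : ℂ → ℂ) w) =ᵐ[dA]
      fun w => -(1 - ((‖z‖ : ℝ):ℂ)^2) *
        ((((1:ℂ) - z * (starRingEnd ℂ) w) ^ 2)⁻¹ * f w) := by
    filter_upwards [Uek_ae hz, hFae] with w h1 h2
    rw [h1, h2, conj_mderiv, mul_assoc]
  rw [integral_congr_ae hcongr, MeasureTheory.integral_const_mul, reproducing hR hf hz]

lemma pin_Uek_left {R : ℝ} (hR : 1 < R) {g : ℂ → ℂ} (hg : DifferentiableOn ℂ g (ball 0 R))
    {G : A2} (hGae : (↑↑((G : A2) : Lp ℂ 2 dA) : ℂ → ℂ) =ᵐ[dA] g)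
    {z : ℂ} (hz : ‖z‖ < 1) :
    pin (Uek z 0) G = -(1 - ((‖z‖ : ℝ):ℂ)^2) * (starRingEnd ℂ) (g z) := by
  have h1 : pin (Uek z 0) G = (starRingEnd ℂ) (pin G (Uek z 0)) := by
    rw [pin, pin]; exact (inner_conj_symm (𝕜 := ℂ) G (Uek z 0)).symm
  rw [h1, pin_Uek_right hR hg hGae hz]
  simp only [map_mul, map_neg, map_sub, map_one, map_pow, Complex.conj_ofReal]

lemma berezin_zero_eq (Q : A2 →L[ℂ] A2) (z : ℂ) :
    berezin 0 Q z = pin (Q (Uek z 0)) (Uek z 0) := by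
  simp [berezin]

lemma berezin_rankOne {R : ℝ} (hR : 1 < R) {f g : ℂ → ℂ}
    (hf : DifferentiableOn ℂ f (ball 0 R)) (hg : DifferentiableOn ℂ g (ball 0 R))
    {F G : A2} (hFae : (↑↑((F : A2) : Lp ℂ 2 dA) : ℂ → ℂ) =ᵐ[dA] f)
    (hGae : (↑↑((G : A2) : Lp ℂ 2 dA) : ℂ → ℂ) =ᵐ[dA] g)
    {z : ℂ} (hz : ‖z‖ < 1) :
    berezin 0 (rankOne F G) z
      = (1 - ((‖z‖ : ℝ):ℂ)^2)^2 * f z * (starRingEnd ℂ) (g z) := by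
  rw [berezin_zero_eq]
  have h1 : rankOne F G (Uek z 0) = (inner ℂ (G : A2) (Uek z 0 : A2) : ℂ) • F := rfl
  rw [h1]
  have h2 : pin ((inner ℂ (G : A2) (Uek z 0 : A2) : ℂ) • F) (Uek z 0)
      = (inner ℂ (G : A2) (Uek z 0 : A2) : ℂ) * pin F (Uek z 0) := by
    rw [pin, pin]; exact inner_smul_right (𝕜 := ℂ) (Uek z 0) F _
  rw [h2]
  have h3 : (inner ℂ (G : A2) (Uek z 0 : A2) : ℂ) = pin (Uek z 0) G := rfl
  rw [h3, pin_Uek_left hR hg hGae hz, pin_Uek_right hR hf hFae hz]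
  ring

-- ============ Section D: Wirtinger calculus ============

/-- `m` is real-differentiable at `z` with Wirtinger derivatives `a = ∂m(z)`, `b = ∂̄m(z)`. -/
def HasWirt (m : ℂ → ℂ) (z a b : ℂ) : Prop :=
  DifferentiableAt ℝ m z ∧ wirtD m z = a ∧ wirtDbar m z = b

lemma hasWirt_holo {f : ℂ → ℂ} {z d : ℂ} (h : HasDerivAt f d z) : HasWirt f z d 0 := by
  have hF : HasFDerivAt f ((ContinuousLinearMap.smulRight (1 : ℂ →L[ℂ] ℂ) d).restrictScalars ℝ)
      z := h.hasFDerivAt.restrictScalars ℝ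
  have hfd := hF.fderiv
  have e1 : fderiv ℝ f z 1 = d := by
    rw [hfd]
    simp [ContinuousLinearMap.coe_restrictScalars']
  have eI : fderiv ℝ f z Complex.I = Complex.I * d := by
    rw [hfd]
    simp [ContinuousLinearMap.coe_restrictScalars', smul_eq_mul]
  have hkey : Complex.I * (Complex.I * d) = -d := by
    rw [← mul_assoc, Complex.I_mul_I]; ring
  exact ⟨hF.differentiableAt, by rw [wirtD, e1, eI, hkey]; ring,
    by rw [wirtDbar, e1, eI, hkey]; ring⟩

lemma hasWirt_conj {g : ℂ → ℂ} {z d : ℂ} (h : HasDerivAt g d z) :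
    HasWirt (fun w => (starRingEnd ℂ) (g w)) z 0 ((starRingEnd ℂ) d) := by
  have hG : HasFDerivAt g ((ContinuousLinearMap.smulRight (1 : ℂ →L[ℂ] ℂ) d).restrictScalars ℝ)
      z := h.hasFDerivAt.restrictScalars ℝ
  have hc : HasFDerivAt (fun w : ℂ => (starRingEnd ℂ) w)
      (Complex.conjCLE.toContinuousLinearMap) (g z) :=
    Complex.conjCLE.toContinuousLinearMap.hasFDerivAt
  have hF : HasFDerivAt (fun w => (starRingEnd ℂ) (g w))
      ((Complex.conjCLE.toContinuousLinearMap).comp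
        ((ContinuousLinearMap.smulRight (1 : ℂ →L[ℂ] ℂ) d).restrictScalars ℝ)) z :=
    hc.comp z hG
  have hfd := hF.fderiv
  have e1 : fderiv ℝ (fun w => (starRingEnd ℂ) (g w)) z 1 = (starRingEnd ℂ) d := by
    rw [hfd]
    simp [ContinuousLinearMap.coe_restrictScalars', Complex.conjCLE_apply]
  have eI : fderiv ℝ (fun w => (starRingEnd ℂ) (g w)) z Complex.I
      = -Complex.I * (starRingEnd ℂ) d := by
    rw [hfd]
    simp [ContinuousLinearMap.coe_restrictScalars', Complex.conjCLE_apply, smul_eq_mul,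
      map_mul, Complex.conj_I]
  have hkey : Complex.I * (-Complex.I * (starRingEnd ℂ) d) = (starRingEnd ℂ) d := by
    rw [← mul_assoc, mul_neg, Complex.I_mul_I]; ring
  exact ⟨hF.differentiableAt, by rw [wirtD, e1, eI, hkey]; ring,
    by rw [wirtDbar, e1, eI, hkey]; ring⟩

lemma HasWirt.mul {m n : ℂ → ℂ} {z a b c d : ℂ} (hm : HasWirt m z a b) (hn : HasWirt n z c d) :
    HasWirt (fun w => m w * n w) z (a * n z + m z * c) (b * n z + m z * d) := by
  obtain ⟨hm1, hm2, hm3⟩ := hm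
  obtain ⟨hn1, hn2, hn3⟩ := hn
  have hfd : fderiv ℝ (fun w => m w * n w) z = _ := fderiv_mul hm1 hn1
  refine ⟨hm1.mul hn1, ?_, ?_⟩
  · rw [wirtD, hfd, ← hm2, ← hn2, wirtD, wirtD]
    simp only [ContinuousLinearMap.add_apply, ContinuousLinearMap.smul_apply, smul_eq_mul]
    ring
  · rw [wirtDbar, hfd, ← hm3, ← hn3, wirtDbar, wirtDbar]
    simp only [ContinuousLinearMap.add_apply, ContinuousLinearMap.smul_apply, smul_eq_mul]
    ring

lemma hasWirt_const (z c : ℂ) : HasWirt (fun _ => c) z 0 0 := by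
  refine ⟨differentiableAt_const c, ?_, ?_⟩ <;>
  · simp [wirtD, wirtDbar, fderiv_const]

lemma HasWirt.add {m n : ℂ → ℂ} {z a b c d : ℂ} (hm : HasWirt m z a b) (hn : HasWirt n z c d) :
    HasWirt (fun w => m w + n w) z (a + c) (b + d) := by
  obtain ⟨hm1, hm2, hm3⟩ := hm
  obtain ⟨hn1, hn2, hn3⟩ := hn
  have hfd : fderiv ℝ (fun w => m w + n w) z = _ := fderiv_add hm1 hn1
  refine ⟨hm1.add hn1, ?_, ?_⟩
  · rw [wirtD, hfd, ← hm2, ← hn2, wirtD, wirtD]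
    simp only [ContinuousLinearMap.add_apply]
    ring
  · rw [wirtDbar, hfd, ← hm3, ← hn3, wirtDbar, wirtDbar]
    simp only [ContinuousLinearMap.add_apply]
    ring

lemma HasWirt.const_sub {m : ℂ → ℂ} {z a b : ℂ} (c : ℂ) (hm : HasWirt m z a b) :
    HasWirt (fun w => c - m w) z (-a) (-b) := by
  obtain ⟨hm1, hm2, hm3⟩ := hm
  have hfd : fderiv ℝ (fun w => c - m w) z = -fderiv ℝ m z := fderiv_const_sub c
  refine ⟨(differentiableAt_const c).sub hm1, ?_, ?_⟩
  · rw [wirtD, hfd, ← hm2, wirtD]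
    simp only [ContinuousLinearMap.neg_apply]
    ring
  · rw [wirtDbar, hfd, ← hm3, wirtDbar]
    simp only [ContinuousLinearMap.neg_apply]
    ring

lemma HasWirt.const_mul {m : ℂ → ℂ} {z a b : ℂ} (c : ℂ) (hm : HasWirt m z a b) :
    HasWirt (fun w => c * m w) z (c * a) (c * b) := by
  have := (hasWirt_const z c).mul hm
  simpa using this

lemma wirtD_congr {u v : ℂ → ℂ} {z : ℂ} (h : u =ᶠ[nhds z] v) : wirtD u z = wirtD v z := by
  rw [wirtD, wirtD, h.fderiv_eq]

lemma wirtDbar_congr {u v : ℂ → ℂ} {z : ℂ} (h : u =ᶠ[nhds z] v) : wirtDbar u z = wirtDbar v z := by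
  rw [wirtDbar, wirtDbar, h.fderiv_eq]

-- ============ Section E: assembly ============

lemma berezin_lin (A B C : A2 →L[ℂ] A2) (z : ℂ) :
    berezin 0 (A + B - (2:ℂ) • C) z = berezin 0 A z + berezin 0 B z - 2 * berezin 0 C z := by
  simp only [berezin_zero_eq, ContinuousLinearMap.sub_apply, ContinuousLinearMap.add_apply,
    ContinuousLinearMap.smul_apply, pin, inner_sub_right, inner_add_right, inner_smul_right]
  congr 1; exact inner_smul_right (𝕜 := ℂ) (Uek z 0) (C (Uek z 0)) 2

lemma abs_sq_eq (w : ℂ) : ((‖w‖ : ℝ) : ℂ)^2 = w * (starRingEnd ℂ) w := by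
  rw [← Complex.ofReal_pow, Complex.sq_norm, Complex.mul_conj]

lemma ball_subset_thick {U : Set ℂ} (hU : IsOpen U) (hsub : closedBall (0:ℂ) 1 ⊆ U) :
    ∃ R : ℝ, 1 < R ∧ ball (0:ℂ) R ⊆ U := by
  obtain ⟨δ, hδ, hsubδ⟩ := (isCompact_closedBall (0:ℂ) 1).exists_cthickening_subset_open hU hsub
  refine ⟨1 + δ, by linarith, ?_⟩
  calc ball (0:ℂ) (1 + δ) ⊆ closedBall 0 (1 + δ) := ball_subset_closedBall
    _ = cthickening δ (closedBall (0:ℂ) 1) := by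
        rw [cthickening_closedBall hδ.le zero_le_one, add_comm]
    _ ⊆ U := hsubδ

/-- The representative of `B₀(F⊗G)` on the disc. -/
def hFun (f g : ℂ → ℂ) : ℂ → ℂ := fun w =>
  (((1 - w * (starRingEnd ℂ) w) * (1 - w * (starRingEnd ℂ) w)) * f w) * (starRingEnd ℂ) (g w)

/-- The `∂̄` of `hFun` on the disc. -/
def QFun (f g : ℂ → ℂ) : ℂ → ℂ := fun y =>
  (-2) * (y * ((1 - y * (starRingEnd ℂ) y) * (f y * (starRingEnd ℂ) (g y)))) +
  ((1 - y * (starRingEnd ℂ) y) * (1 - y * (starRingEnd ℂ) y)) *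
    (f y * (starRingEnd ℂ) (deriv g y))

lemma wirtDbar_hFun {f g : ℂ → ℂ} {y df dg : ℂ}
    (hfy : HasDerivAt f df y) (hgy : HasDerivAt g dg y) :
    wirtDbar (hFun f g) y
      = (-2) * (y * ((1 - y * (starRingEnd ℂ) y) * (f y * (starRingEnd ℂ) (g y)))) +
        ((1 - y * (starRingEnd ℂ) y) * (1 - y * (starRingEnd ℂ) y)) *
          (f y * (starRingEnd ℂ) dg) := by
  have hid : HasDerivAt (fun w : ℂ => w) 1 y := hasDerivAt_id y
  have hP := HasWirt.const_sub 1 ((hasWirt_holo hid).mul (hasWirt_conj hid))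
  have hW := ((hP.mul hP).mul (hasWirt_holo hfy)).mul (hasWirt_conj hgy)
  have e2 : wirtDbar (hFun f g) y = _ := hW.2.2
  rw [e2]
  simp only [map_one]
  ring

lemma wirtD_QFun {f g : ℂ → ℂ} {z df dg d2g : ℂ} (hfz : HasDerivAt f df z)
    (hgz : HasDerivAt g dg z) (hg2z : HasDerivAt (deriv g) d2g z) :
    wirtD (QFun f g) z
      = ((1 - z * (starRingEnd ℂ) z) * (1 - z * (starRingEnd ℂ) z)) * (df * (starRingEnd ℂ) dg)
        - 2 * ((starRingEnd ℂ) z) * (1 - z * (starRingEnd ℂ) z) * (f z * (starRingEnd ℂ) dg)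
        - 2 * z * (1 - z * (starRingEnd ℂ) z) * (df * (starRingEnd ℂ) (g z))
        - 2 * (1 - 2 * (z * (starRingEnd ℂ) z)) * (f z * (starRingEnd ℂ) (g z)) := by
  have hid : HasDerivAt (fun w : ℂ => w) 1 z := hasDerivAt_id z
  have hP := HasWirt.const_sub 1 ((hasWirt_holo hid).mul (hasWirt_conj hid))
  have hT1 := (hasWirt_const z (-2)).mul
    ((hasWirt_holo hid).mul (hP.mul ((hasWirt_holo hfz).mul (hasWirt_conj hgz))))
  have hT2 := (hP.mul hP).mul ((hasWirt_holo hfz).mul (hasWirt_conj hg2z))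
  have hQW := hT1.add hT2
  have e2 : wirtD (QFun f g) z = _ := hQW.2.1
  rw [e2, hgz.deriv]
  ring
/-- If `f, g` are holomorphic on a neighborhood of the closed unit disc,
then the rank-one operator `f ⊗ g` belongs to `𝔇` and
`Δ̃(f⊗g) = (f′⊗g′) + ((z²f)′⊗(z²g)′) − 2 (zf)′⊗(zg)′`. -/
theorem statement0 (f g : ℂ → ℂ)
    (hf : ∃ U : Set ℂ, IsOpen U ∧ Metric.closedBall (0 : ℂ) 1 ⊆ U ∧ DifferentiableOn ℂ f U)
    (hg : ∃ U : Set ℂ, IsOpen U ∧ Metric.closedBall (0 : ℂ) 1 ⊆ U ∧ DifferentiableOn ℂ g U)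
    (F G F₁ G₁ F₂ G₂ F₃ G₃ : A2)
    (hF : (↑↑(F : Lp ℂ 2 dA) : ℂ → ℂ) =ᵐ[dA] f)
    (hG : (↑↑(G : Lp ℂ 2 dA) : ℂ → ℂ) =ᵐ[dA] g)
    (hF₁ : (↑↑(F₁ : Lp ℂ 2 dA) : ℂ → ℂ) =ᵐ[dA] deriv f)
    (hG₁ : (↑↑(G₁ : Lp ℂ 2 dA) : ℂ → ℂ) =ᵐ[dA] deriv g)
    (hF₂ : (↑↑(F₂ : Lp ℂ 2 dA) : ℂ → ℂ) =ᵐ[dA] deriv (fun w => w ^ 2 * f w))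
    (hG₂ : (↑↑(G₂ : Lp ℂ 2 dA) : ℂ → ℂ) =ᵐ[dA] deriv (fun w => w ^ 2 * g w))
    (hF₃ : (↑↑(F₃ : Lp ℂ 2 dA) : ℂ → ℂ) =ᵐ[dA] deriv (fun w => w * f w))
    (hG₃ : (↑↑(G₃ : Lp ℂ 2 dA) : ℂ → ℂ) =ᵐ[dA] deriv (fun w => w * g w)) :
    IsLap (rankOne F G)
      (rankOne F₁ G₁ + rankOne F₂ G₂ - (2 : ℂ) • rankOne F₃ G₃) := by
  obtain ⟨Uf, hUfo, hUfs, hUfd⟩ := hf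
  obtain ⟨Ug, hUgo, hUgs, hUgd⟩ := hg
  obtain ⟨Rf, hRf, hRfs⟩ := ball_subset_thick hUfo hUfs
  obtain ⟨Rg, hRg, hRgs⟩ := ball_subset_thick hUgo hUgs
  set R := min Rf Rg with hRdef
  have hR : 1 < R := lt_min hRf hRg
  have hfd : DifferentiableOn ℂ f (ball 0 R) :=
    (hUfd.mono hRfs).mono (ball_subset_ball (min_le_left _ _))
  have hgd : DifferentiableOn ℂ g (ball 0 R) :=
    (hUgd.mono hRgs).mono (ball_subset_ball (min_le_right _ _))
  have hfa : AnalyticOnNhd ℂ f (ball 0 R) := hfd.analyticOnNhd isOpen_ball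
  have hga : AnalyticOnNhd ℂ g (ball 0 R) := hgd.analyticOnNhd isOpen_ball
  have hida : AnalyticOnNhd ℂ (fun w : ℂ => w) (ball (0:ℂ) R) := analyticOnNhd_id
  have hf1 : DifferentiableOn ℂ (deriv f) (ball 0 R) := hfa.deriv.differentiableOn
  have hg1 : DifferentiableOn ℂ (deriv g) (ball 0 R) := hga.deriv.differentiableOn
  have hf2 : DifferentiableOn ℂ (deriv (fun w => w ^ 2 * f w)) (ball 0 R) :=
    (((hida.pow 2).mul hfa).deriv).differentiableOn
  have hg2 : DifferentiableOn ℂ (deriv (fun w => w ^ 2 * g w)) (ball 0 R) :=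
    (((hida.pow 2).mul hga).deriv).differentiableOn
  have hf3 : DifferentiableOn ℂ (deriv (fun w => w * f w)) (ball 0 R) :=
    ((hida.mul hfa).deriv).differentiableOn
  have hg3 : DifferentiableOn ℂ (deriv (fun w => w * g w)) (ball 0 R) :=
    ((hida.mul hga).deriv).differentiableOn
  intro z hz
  have hz1 : ‖z‖ < 1 := by
    simpa [unitDisc, mem_ball, Complex.dist_eq] using hz
  have hzball : z ∈ ball (0:ℂ) 1 := hz
  have hzR : z ∈ ball (0:ℂ) R := ball_subset_ball hR.le hzball
  -- right hand side
  rw [berezin_lin, berezin_rankOne hR hf1 hg1 hF₁ hG₁ hz1,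
    berezin_rankOne hR hf2 hg2 hF₂ hG₂ hz1, berezin_rankOne hR hf3 hg3 hF₃ hG₃ hz1]
  -- left hand side
  have hBh : ∀ w ∈ ball (0:ℂ) 1, berezin 0 (rankOne F G) w = hFun f g w := by
    intro w hw
    have hw1 : ‖w‖ < 1 := by simpa [mem_ball, Complex.dist_eq] using hw
    rw [berezin_rankOne hR hfd hgd hF hG hw1, hFun, abs_sq_eq w]
    ring
  have hQ : ∀ y ∈ ball (0:ℂ) 1, wirtDbar (hFun f g) y = QFun f g y := by
    intro y hy
    have hyR : y ∈ ball (0:ℂ) R := ball_subset_ball hR.le hy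
    have hfy : HasDerivAt f (deriv f y) y :=
      (hfd.differentiableAt (isOpen_ball.mem_nhds hyR)).hasDerivAt
    have hgy : HasDerivAt g (deriv g y) y :=
      (hgd.differentiableAt (isOpen_ball.mem_nhds hyR)).hasDerivAt
    rw [wirtDbar_hFun hfy hgy]
    rfl
  have hfz : HasDerivAt f (deriv f z) z :=
    (hfd.differentiableAt (isOpen_ball.mem_nhds hzR)).hasDerivAt
  have hgz : HasDerivAt g (deriv g z) z :=
    (hgd.differentiableAt (isOpen_ball.mem_nhds hzR)).hasDerivAt
  have hg2z : HasDerivAt (deriv g) (deriv (deriv g) z) z :=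
    (hg1.differentiableAt (isOpen_ball.mem_nhds hzR)).hasDerivAt
  have hBQ : wirtD (wirtDbar (berezin 0 (rankOne F G))) z = wirtD (QFun f g) z := by
    apply wirtD_congr
    filter_upwards [isOpen_ball.mem_nhds hzball] with y hy
    have e1 : wirtDbar (berezin 0 (rankOne F G)) y = wirtDbar (hFun f g) y := by
      apply wirtDbar_congr
      filter_upwards [isOpen_ball.mem_nhds hy] with w hw
      exact hBh w hw
    rw [e1, hQ y hy]
  rw [invLap, hBQ, wirtD_QFun hfz hgz hg2z]
  -- final algebra
  have hderiv2f : deriv (fun w => w ^ 2 * f w) z = 2 * z * f z + z ^ 2 * deriv f z := by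
    have : deriv (fun w => w ^ 2 * f w) z = _ := ((hasDerivAt_pow 2 z).mul hfz).deriv
    rw [this]; push_cast; ring
  have hderiv2g : deriv (fun w => w ^ 2 * g w) z = 2 * z * g z + z ^ 2 * deriv g z := by
    have : deriv (fun w => w ^ 2 * g w) z = _ := ((hasDerivAt_pow 2 z).mul hgz).deriv
    rw [this]; push_cast; ring
  have hderiv1f : deriv (fun w => w * f w) z = f z + z * deriv f z := by
    have hidz : HasDerivAt (fun w : ℂ => w) 1 z := hasDerivAt_id z
    have : deriv (fun w => w * f w) z = _ := (hidz.mul hfz).deriv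
    rw [this]; ring
  have hderiv1g : deriv (fun w => w * g w) z = g z + z * deriv g z := by
    have hidz : HasDerivAt (fun w : ℂ => w) 1 z := hasDerivAt_id z
    have : deriv (fun w => w * g w) z = _ := (hidz.mul hgz).deriv
    rw [this]; ring
  rw [hderiv2f, hderiv2g, hderiv1f, hderiv1g]
  have hcoe : (((1 - ‖z‖ ^ 2) ^ 2 : ℝ) : ℂ)
      = (1 - z * (starRingEnd ℂ) z) ^ 2 := by
    push_cast
    rw [abs_sq_eq z]
  rw [hcoe]
  simp only [map_add, map_mul, map_pow, map_ofNat, abs_sq_eq]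
  ring

end Bergman
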